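/- Fix an integer a ≥ 1 and an integer m ≥ 1. Let P(Y) = Σ_{l=0}^{d} p_l Y^l ∈ R[Y] be an m-triangular polynomial of degree d, and let t_{d−a}, …, t_d be nonzero complex numbers. For x = (x_0, …, x_a) ∈ ℂ^a × ℂ*, let ev_x : R → ℂ denote the ℂ-algebra homomorphism sending u_i to x_i for 0 ≤ i ≤ a (well defined since x_a ≠ 0). Then the map from ℂ^a × ℂ* to itself sending x to (t_{d−a}·ev_x(p_{d−a}), …, t_d·ev_x(p_d)) is surjective. -/

import Mathlib

open Polynomial

noncomputable section

/-- The ring `R = ℂ[u₀,…,u_{a−1}][u_a, u_a⁻¹]`: Laurent polynomials in `u_a`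
over the polynomial ring `ℂ[u₀,…,u_{a−1}]`. -/
abbrev LaurentRing (a : ℕ) : Type := LaurentPolynomial (MvPolynomial (Fin a) ℂ)

/-- The generators `u_0, …, u_a` of `R`; `u i` for `i < a` is the polynomial variable `u_i`,
and `u a` is the Laurent variable `u_a`. -/
noncomputable def u (a : ℕ) (i : ℕ) : LaurentRing a :=
  if h : i < a then LaurentPolynomial.C (MvPolynomial.X (⟨i, h⟩ : Fin a))
  else LaurentPolynomial.T 1

/-- `P ∈ R[Y]` is `m`-triangular of degree `d` if `deg P = d ≥ a` and for `d − a ≤ l ≤ d`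
one has `p_l = q_l u_a^{m−1} u_{a−d+l} + P_l` with `q_l ∈ ℚ`, `q_l > 0`, and
`P_l ∈ ℂ[u_{a−d+l+1},…,u_a]`; for `l = d` this means `p_d = q_d u_a^m`. -/
def IsTriangular (a m d : ℕ) (P : Polynomial (LaurentRing a)) : Prop :=
  P.natDegree = d ∧ a ≤ d ∧
  (∃ q : ℚ, 0 < q ∧ P.coeff d = algebraMap ℚ (LaurentRing a) q * (u a a) ^ m) ∧
  (∀ l, d - a ≤ l → l < d →
    ∃ (q : ℚ) (Pl : LaurentRing a), 0 < q ∧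
      Pl ∈ Algebra.adjoin ℂ (u a '' {i : ℕ | a - (d - l) + 1 ≤ i ∧ i ≤ a}) ∧
      P.coeff l = algebraMap ℚ (LaurentRing a) q *
        ((u a a) ^ (m - 1) * u a (a - (d - l))) + Pl)

/-- Two `ℂ`-algebra homomorphisms agreeing on a set agree on the adjoined subalgebra. -/
theorem algHom_eqOn_adjoin {A : Type*} [CommRing A] [Algebra ℂ A]
    (f g : A →ₐ[ℂ] ℂ) (s : Set A) (hs : ∀ z ∈ s, f z = g z) :
    ∀ b ∈ Algebra.adjoin ℂ s, f b = g b := by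
  intro b hb
  induction hb using Algebra.adjoin_induction with
  | mem z hz => exact hs z hz
  | algebraMap c => simp [AlgHom.commutes]
  | add x y hx hy h1 h2 => simp [map_add, h1, h2]
  | mul x y hx hy h1 h2 => simp [map_mul, h1, h2]

/-- if `P` is `m`-triangular of degree `d` and `t_{d−a},…,t_d` are nonzero
complex numbers, then, denoting by `ev x hx` the `ℂ`-algebra homomorphism `R → ℂ`
sending `u_i` to `x_i` (for `x = (x_0,…,x_a) ∈ ℂ^a × ℂ*`), the map
`x ↦ (t_{d−a}·ev_x(p_{d−a}), …, t_d·ev_x(p_d))` from `ℂ^a × ℂ*` to itself is surjective. -/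
theorem triangular_surjective (a : ℕ) (ha : 1 ≤ a) (m : ℕ) (hm : 1 ≤ m) (d : ℕ)
    (P : Polynomial (LaurentRing a)) (hP : IsTriangular a m d P)
    (t : ℕ → ℂ) (ht : ∀ l, d - a ≤ l → l ≤ d → t l ≠ 0)
    (ev : ∀ x : ℕ → ℂ, x a ≠ 0 → (LaurentRing a →ₐ[ℂ] ℂ))
    (hev : ∀ (x : ℕ → ℂ) (hx : x a ≠ 0) (i : ℕ), i ≤ a → ev x hx (u a i) = x i) :
    ∀ y : ℕ → ℂ, y d ≠ 0 → ∃ (x : ℕ → ℂ) (hx : x a ≠ 0),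
      ∀ l, d - a ≤ l → l ≤ d → t l * ev x hx (P.coeff l) = y l := by
  intro y hy
  obtain ⟨hdeg, had, ⟨qd, hqd, hcd⟩, hco⟩ := hP
  have htd : t d ≠ 0 := ht d (Nat.sub_le d a) le_rfl
  have hqdC : (qd : ℂ) ≠ 0 := Rat.cast_ne_zero.mpr (ne_of_gt hqd)
  obtain ⟨ξ, hξ⟩ : ∃ z : ℂ, z ^ m = y d / (t d * (qd : ℂ)) :=
    IsAlgClosed.exists_pow_nat_eq _ (by omega)
  have hξ0 : ξ ≠ 0 := by
    intro h
    rw [h, zero_pow (by omega)] at hξ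
    exact (div_ne_zero hy (mul_ne_zero htd hqdC)) hξ.symm
  choose q Pl hq hPmem hPco using hco
  have hd0 : 0 < d := by omega
  -- rational constants evaluate to their cast
  have hrat : ∀ (f : LaurentRing a →ₐ[ℂ] ℂ) (r : ℚ),
      f (algebraMap ℚ (LaurentRing a) r) = (r : ℂ) := by
    intro f r
    exact eq_ratCast (f.toRingHom.comp (algebraMap ℚ (LaurentRing a))) r
  -- the recursive construction
  let F : ℕ → (ℕ → ℂ) → ℂ := fun k v =>
    if h : 1 ≤ k ∧ k ≤ a ∧ v a ≠ 0 then
      (y (d - k) / t (d - k)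
        - ev v h.2.2 (Pl (d - k) (Nat.sub_le_sub_left h.2.1 d) (Nat.sub_lt hd0 h.1)))
        / ((q (d - k) (Nat.sub_le_sub_left h.2.1 d) (Nat.sub_lt hd0 h.1) : ℂ) * (v a) ^ (m - 1))
    else 0
  let X : ℕ → ℕ → ℂ := fun k =>
    Nat.rec (fun i => if i = a then ξ else 0)
      (fun j xj => Function.update xj (a - (j + 1)) (F (j + 1) xj)) k
  have hXs : ∀ k, X (k + 1) = Function.update (X k) (a - (k + 1)) (F (k + 1) (X k)) :=
    fun k => rfl
  have hX0 : ∀ i, X 0 i = if i = a then ξ else 0 := fun _ => rfl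
  have hXa : ∀ k, X k a = ξ := by
    intro k
    induction k with
    | zero => rw [hX0]; simp
    | succ k ih => rw [hXs, Function.update_of_ne (by omega)]; exact ih
  have hstab : ∀ j, j ≤ a → ∀ k, k ≤ j → ∀ i, a - k ≤ i → X j i = X k i := by
    intro j hj
    induction j with
    | zero =>
      intro k hk i hi
      have : k = 0 := by omega
      subst this; rfl
    | succ j ih =>
      intro k hk i hi
      rcases Nat.eq_or_lt_of_le hk with rfl | hk'
      · rfl
      · have hk2 : k ≤ j := by omega
        rw [hXs, Function.update_of_ne (by omega)]
        exact ih (by omega) k hk2 i hi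
  set x : ℕ → ℂ := X a with hxdef
  have hxa : x a = ξ := hXa a
  have hx : x a ≠ 0 := by rw [hxa]; exact hξ0
  refine ⟨x, hx, ?_⟩
  intro l hl1 hl2
  rcases Nat.eq_or_lt_of_le hl2 with rfl | hl'
  · rw [hcd, map_mul, map_pow, hrat, hev x hx a le_rfl, hxa, hξ]
    field_simp
  · obtain ⟨k, hk1, hka, rfl⟩ : ∃ k, 1 ≤ k ∧ k ≤ a ∧ l = d - k :=
      ⟨d - l, by omega, by omega, by omega⟩
    obtain ⟨k', rfl⟩ : ∃ k', k = k' + 1 := ⟨k - 1, by omega⟩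
    set k := k' + 1
    have pf1 : d - a ≤ d - k := by omega
    have pf2 : d - k < d := by omega
    have hdd : d - (d - k) = k := by omega
    have hcoeff := hPco (d - k) pf1 pf2
    have hmem := hPmem (d - k) pf1 pf2
    simp only [hdd] at hcoeff hmem
    -- value of x at a - k
    have hva : X k' a ≠ 0 := by rw [hXa]; exact hξ0
    have hFval : x (a - k) =
        (y (d - k) / t (d - k) - ev (X k') hva (Pl (d - k) pf1 pf2))
          / ((q (d - k) pf1 pf2 : ℂ) * (X k' a) ^ (m - 1)) := by
      have h1 : x (a - k) = X k (a - k) := hstab a le_rfl k hka (a - k) le_rfl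
      rw [h1, hXs, Function.update_self]
      exact dif_pos ⟨by omega, hka, hva⟩
    -- the error terms agree
    have hE : ev x hx (Pl (d - k) pf1 pf2) = ev (X k') hva (Pl (d - k) pf1 pf2) := by
      refine algHom_eqOn_adjoin _ _ _ ?_ _ hmem
      rintro z ⟨i, hi, rfl⟩
      obtain ⟨hi1, hi2⟩ := hi
      rw [hev x hx i hi2, hev (X k') hva i hi2]
      exact hstab a le_rfl k' (by omega) i (by omega)
    rw [hcoeff, map_add, map_mul, map_mul, map_pow, hrat, hev x hx a le_rfl,
      hev x hx (a - k) (by omega), hxa, hE, hFval, hXa k']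
    have hqC : (q (d - k) pf1 pf2 : ℂ) ≠ 0 :=
      Rat.cast_ne_zero.mpr (ne_of_gt (hq (d - k) pf1 pf2))
    have hξm : ξ ^ (m - 1) ≠ 0 := pow_ne_zero _ hξ0
    have htl : t (d - k) ≠ 0 := ht (d - k) pf1 (by omega)
    field_simp
    ring
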